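/- Let A be a commutative ring containing an element ε ≠ 0 with ε² = 0. Then there exist bounded cochain complexes K, L, M of finitely generated free A-modules, morphisms of complexes j : K → L and q : L → M such that 0 → K^n → L^n → M^n → 0 is exact for every n, and morphisms of complexes u : K → K, v : L → L, w : M → M such that v ∘ j is chain homotopic to j ∘ u and q ∘ v = w ∘ q, but Tr(v) ≠ Tr(u) + Tr(w). Explicitly one may take K = A placed in degree 1, L the complex A → A in degrees 0 and 1 with differential multiplication by ε, M = A placed in degree 0, j the identity in degree 1, q the identity in degree 0, u = 0, w = 0, and v given by 0 in degree 0 and multiplication by ε in degree 1; then Tr(u) = Tr(w) = 0 while Tr(v) = −ε ≠ 0. -/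

import Mathlib

/-!
STATEMENT 6: Let `A` be a commutative ring containing an element `ε ≠ 0` with
`ε² = 0`.  Then there exist bounded cochain complexes `K, L, M` of finitely
generated free `A`-modules, morphisms of complexes `j : K → L` and `q : L → M`
with `0 → Kⁿ → Lⁿ → Mⁿ → 0` exact for every `n`, and morphisms of complexes
`u : K → K`, `v : L → L`, `w : M → M` such that `v ∘ j` is chain homotopic to
`j ∘ u` and `q ∘ v = w ∘ q`, but `Tr(v) ≠ Tr(u) + Tr(w)`.

Complexes are modelled as families `ℤ → ModuleCat A` with differentials
squaring to zero; boundedness means triviality outside a finite set of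
degrees; the trace of a degreewise endomorphism is `∑ᶠ i, (-1)^i * Tr(uⁱ)`.
The chain homotopy `h` is indexed so that `h i : K^{i+1} →ₗ[A] Lⁱ`; the
homotopy identity `(v∘j)ⁿ - (j∘u)ⁿ = d^{n-1}_L ∘ hⁿ + h^{n+1} ∘ dⁿ_K` (for all
`n : ℤ`) is expressed, writing `n = i + 1`, by the equation below.
-/

/-- The trace of an endomorphism (given degreewise) of a (bounded) cochain
complex of `A`-modules: `Tr(u) = ∑ᶠ i, (-1)^i * Tr(uⁱ)`. -/
noncomputable def complexTrace {A : Type} [CommRing A] (K : ℤ → ModuleCat A)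
    (u : ∀ i, K i →ₗ[A] K i) : A :=
  ∑ᶠ i : ℤ, (-1 : A) ^ i.natAbs * LinearMap.trace A (K i) (u i)

universe u v w

noncomputable def uid (A : Type) [CommRing A] : ULift.{u} A →ₗ[A] ULift.{v} A :=
  (ULift.moduleEquiv.symm.toLinearMap).comp ULift.moduleEquiv.toLinearMap

section
variable (A : Type) [CommRing A] (ε : A)

noncomputable def Kc : ℤ → ModuleCat.{u} A := fun i => match i with
  | 1 => ModuleCat.of A (ULift.{u} A)
  | _ => ModuleCat.of A PUnit.{u+1}

noncomputable def Lc : ℤ → ModuleCat.{v} A := fun i => match i with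
  | 0 => ModuleCat.of A (ULift.{v} A)
  | 1 => ModuleCat.of A (ULift.{v} A)
  | _ => ModuleCat.of A PUnit.{v+1}

noncomputable def Mc : ℤ → ModuleCat.{w} A := fun i => match i with
  | 0 => ModuleCat.of A (ULift.{w} A)
  | _ => ModuleCat.of A PUnit.{w+1}

noncomputable def dLc : ∀ i, Lc.{v} A i →ₗ[A] Lc.{v} A (i + 1) := fun i => match i with
  | 0 => ε • (LinearMap.id : ULift.{v} A →ₗ[A] ULift.{v} A)
  | _ => 0

noncomputable def vc : ∀ i, Lc.{v} A i →ₗ[A] Lc.{v} A i := fun i => match i with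
  | 1 => ε • (LinearMap.id : ULift.{v} A →ₗ[A] ULift.{v} A)
  | _ => 0

noncomputable def jc : ∀ i, Kc.{u} A i →ₗ[A] Lc.{v} A i := fun i => match i with
  | 1 => uid.{u,v} A
  | _ => 0

noncomputable def qc : ∀ i, Lc.{v} A i →ₗ[A] Mc.{w} A i := fun i => match i with
  | 0 => uid.{v,w} A
  | _ => 0

noncomputable def hc : ∀ i, Kc.{u} A (i + 1) →ₗ[A] Lc.{v} A i := fun i => match i with
  | 0 => uid.{u,v} A
  | _ => 0

lemma vc_eq_zero (i : ℤ) (h : i ≠ 1) : vc.{v} A ε i = 0 := by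
  match i with
  | 0 => rfl
  | 1 => exact absurd rfl h
  | Int.ofNat (n+2) => rfl
  | Int.negSucc n => rfl

lemma dLc_eq_zero (i : ℤ) (h : i ≠ 0) : dLc.{v} A ε i = 0 := by
  match i with
  | 0 => exact absurd rfl h
  | Int.ofNat (n+1) => rfl
  | Int.negSucc n => rfl

lemma jc_eq_zero (i : ℤ) (h : i ≠ 1) : jc.{u,v} A i = 0 := by
  match i with
  | 0 => rfl
  | 1 => exact absurd rfl h
  | Int.ofNat (n+2) => rfl
  | Int.negSucc n => rfl

lemma qc_eq_zero (i : ℤ) (h : i ≠ 0) : qc.{v,w} A i = 0 := by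
  match i with
  | 0 => exact absurd rfl h
  | Int.ofNat (n+1) => rfl
  | Int.negSucc n => rfl

lemma hc_eq_zero (i : ℤ) (h : i ≠ 0) : hc.{u,v} A i = 0 := by
  match i with
  | 0 => exact absurd rfl h
  | Int.ofNat (n+1) => rfl
  | Int.negSucc n => rfl

lemma Kc_sub (i : ℤ) (h : i ≠ 1) : Subsingleton (Kc.{u} A i) := by
  match i with
  | 0 => exact inferInstanceAs (Subsingleton PUnit)
  | 1 => exact absurd rfl h
  | Int.ofNat (n+2) => exact inferInstanceAs (Subsingleton PUnit)
  | Int.negSucc n => exact inferInstanceAs (Subsingleton PUnit)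

lemma Lc_sub (i : ℤ) (h0 : i ≠ 0) (h1 : i ≠ 1) : Subsingleton (Lc.{v} A i) := by
  match i with
  | 0 => exact absurd rfl h0
  | 1 => exact absurd rfl h1
  | Int.ofNat (n+2) => exact inferInstanceAs (Subsingleton PUnit)
  | Int.negSucc n => exact inferInstanceAs (Subsingleton PUnit)

lemma Mc_sub (i : ℤ) (h : i ≠ 0) : Subsingleton (Mc.{w} A i) := by
  match i with
  | 0 => exact absurd rfl h
  | Int.ofNat (n+1) => exact inferInstanceAs (Subsingleton PUnit)
  | Int.negSucc n => exact inferInstanceAs (Subsingleton PUnit)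

lemma Kc_fin_free (i : ℤ) : Module.Finite A (Kc.{u} A i) ∧ Module.Free A (Kc.{u} A i) := by
  match i with
  | 1 => exact ⟨inferInstanceAs (Module.Finite A (ULift A)), inferInstanceAs (Module.Free A (ULift A))⟩
  | 0 => exact ⟨inferInstanceAs (Module.Finite A PUnit.{u+1}), inferInstanceAs (Module.Free A PUnit.{u+1})⟩
  | Int.ofNat (n+2) => exact ⟨inferInstanceAs (Module.Finite A PUnit.{u+1}), inferInstanceAs (Module.Free A PUnit.{u+1})⟩
  | Int.negSucc n => exact ⟨inferInstanceAs (Module.Finite A PUnit.{u+1}), inferInstanceAs (Module.Free A PUnit.{u+1})⟩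

lemma Lc_fin_free (i : ℤ) : Module.Finite A (Lc.{v} A i) ∧ Module.Free A (Lc.{v} A i) := by
  match i with
  | 0 => exact ⟨inferInstanceAs (Module.Finite A (ULift A)), inferInstanceAs (Module.Free A (ULift A))⟩
  | 1 => exact ⟨inferInstanceAs (Module.Finite A (ULift A)), inferInstanceAs (Module.Free A (ULift A))⟩
  | Int.ofNat (n+2) => exact ⟨inferInstanceAs (Module.Finite A PUnit.{v+1}), inferInstanceAs (Module.Free A PUnit.{v+1})⟩
  | Int.negSucc n => exact ⟨inferInstanceAs (Module.Finite A PUnit.{v+1}), inferInstanceAs (Module.Free A PUnit.{v+1})⟩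

lemma Mc_fin_free (i : ℤ) : Module.Finite A (Mc.{w} A i) ∧ Module.Free A (Mc.{w} A i) := by
  match i with
  | 0 => exact ⟨inferInstanceAs (Module.Finite A (ULift A)), inferInstanceAs (Module.Free A (ULift A))⟩
  | Int.ofNat (n+1) => exact ⟨inferInstanceAs (Module.Finite A PUnit.{w+1}), inferInstanceAs (Module.Free A PUnit.{w+1})⟩
  | Int.negSucc n => exact ⟨inferInstanceAs (Module.Finite A PUnit.{w+1}), inferInstanceAs (Module.Free A PUnit.{w+1})⟩

lemma exact_lemma (i : ℤ) : Function.Injective (jc.{u,v} A i) ∧ Function.Exact (jc.{u,v} A i) (qc.{v,w} A i) ∧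
    Function.Surjective (qc.{v,w} A i) := by
  match i with
  | 1 =>
    haveI := Mc_sub.{w} A 1 one_ne_zero
    refine ⟨fun a b hab => ?_, fun y => ?_, fun y => ⟨0, Subsingleton.elim _ _⟩⟩
    · have h2 : a.down = b.down := by
        have := congrArg ULift.down hab; exact this
      exact ULift.down_injective h2
    constructor
    · intro _; exact ⟨ULift.up y.down, rfl⟩
    · intro _; exact Subsingleton.elim _ _
  | 0 =>
    haveI := Kc_sub.{u} A 0 (by decide)
    refine ⟨fun a b _ => Subsingleton.elim a b, fun y => ?_, fun y => ⟨ULift.up y.down, rfl⟩⟩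
    constructor
    · intro hy
      have hd : y.down = 0 := by
        have := congrArg ULift.down hy; exact this
      refine ⟨PUnit.unit, ?_⟩
      have h0 : (0 : A) = y.down := hd.symm
      exact ULift.down_injective (by exact h0)
    · rintro ⟨x, rfl⟩; rfl
  | Int.ofNat (n+2) =>
    haveI := Kc_sub.{u} A (Int.ofNat (n+2)) (by rw [Int.ofNat_eq_coe]; omega)
    haveI := Lc_sub.{v} A (Int.ofNat (n+2)) (by rw [Int.ofNat_eq_coe]; omega) (by rw [Int.ofNat_eq_coe]; omega)
    haveI := Mc_sub.{w} A (Int.ofNat (n+2)) (by rw [Int.ofNat_eq_coe]; omega)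
    refine ⟨fun a b _ => Subsingleton.elim a b, fun y => ?_, fun y => ⟨0, Subsingleton.elim _ _⟩⟩
    exact ⟨fun _ => ⟨0, Subsingleton.elim _ _⟩, fun _ => Subsingleton.elim _ _⟩
  | Int.negSucc n =>
    haveI := Kc_sub.{u} A (Int.negSucc n) (by rw [Int.negSucc_eq]; omega)
    haveI := Lc_sub.{v} A (Int.negSucc n) (by rw [Int.negSucc_eq]; omega) (by rw [Int.negSucc_eq]; omega)
    haveI := Mc_sub.{w} A (Int.negSucc n) (by rw [Int.negSucc_eq]; omega)
    refine ⟨fun a b _ => Subsingleton.elim a b, fun y => ?_, fun y => ⟨0, Subsingleton.elim _ _⟩⟩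
    exact ⟨fun _ => ⟨0, Subsingleton.elim _ _⟩, fun _ => Subsingleton.elim _ _⟩

lemma trace_vc [Nontrivial A] : LinearMap.trace A (Lc.{v} A 1) (vc.{v} A ε 1) = ε := by
  have h : LinearMap.trace A (ULift.{v} A) (ε • (LinearMap.id : ULift.{v} A →ₗ[A] ULift.{v} A)) = ε := by
    rw [map_smul, LinearMap.trace_id]
    simp [finrank_ulift, Module.finrank_self]
  exact h

end

theorem exists_counterexample_to_homotopy_trace_additivity
    (A : Type) [CommRing A] (ε : A) (hne : ε ≠ 0) (hsq : ε ^ 2 = 0) :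
    ∃ (K L M : ℤ → ModuleCat A)
      (dK : ∀ i, K i →ₗ[A] K (i + 1))
      (dL : ∀ i, L i →ₗ[A] L (i + 1))
      (dM : ∀ i, M i →ₗ[A] M (i + 1))
      (j : ∀ i, K i →ₗ[A] L i) (q : ∀ i, L i →ₗ[A] M i)
      (u : ∀ i, K i →ₗ[A] K i) (v : ∀ i, L i →ₗ[A] L i)
      (w : ∀ i, M i →ₗ[A] M i),
      -- K, L, M are cochain complexes ...
      (∀ i, (dK (i + 1)).comp (dK i) = 0) ∧
      (∀ i, (dL (i + 1)).comp (dL i) = 0) ∧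
      (∀ i, (dM (i + 1)).comp (dM i) = 0) ∧
      -- ... which are bounded ...
      (∃ S : Finset ℤ, ∀ i ∉ S,
        Subsingleton (K i) ∧ Subsingleton (L i) ∧ Subsingleton (M i)) ∧
      -- ... and consist of finitely generated free A-modules;
      (∀ i, Module.Finite A (K i) ∧ Module.Free A (K i)) ∧
      (∀ i, Module.Finite A (L i) ∧ Module.Free A (L i)) ∧
      (∀ i, Module.Finite A (M i) ∧ Module.Free A (M i)) ∧
      -- j and q are morphisms of complexes ...
      (∀ i, (dL i).comp (j i) = (j (i + 1)).comp (dK i)) ∧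
      (∀ i, (dM i).comp (q i) = (q (i + 1)).comp (dL i)) ∧
      -- ... with 0 → Kⁿ → Lⁿ → Mⁿ → 0 exact for every n;
      (∀ i, Function.Injective (j i) ∧ Function.Exact (j i) (q i) ∧
        Function.Surjective (q i)) ∧
      -- u, v, w are morphisms of complexes ...
      (∀ i, (dK i).comp (u i) = (u (i + 1)).comp (dK i)) ∧
      (∀ i, (dL i).comp (v i) = (v (i + 1)).comp (dL i)) ∧
      (∀ i, (dM i).comp (w i) = (w (i + 1)).comp (dM i)) ∧
      -- ... such that v ∘ j is chain homotopic to j ∘ u ...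
      (∃ h : ∀ i, K (i + 1) →ₗ[A] L i, ∀ i,
        (v (i + 1)).comp (j (i + 1)) - (j (i + 1)).comp (u (i + 1)) =
          (dL i).comp (h i) + (h (i + 1)).comp (dK (i + 1))) ∧
      -- ... and q ∘ v = w ∘ q, ...
      (∀ i, (q i).comp (v i) = (w i).comp (q i)) ∧
      -- ... but the trace is not additive:
      complexTrace L v ≠ complexTrace K u + complexTrace M w := by
  refine ⟨Kc A, Lc A, Mc A, fun _ => 0, dLc A ε, fun _ => 0, jc A, qc A,
    fun _ => 0, vc A ε, fun _ => 0, ?_, ?_, ?_, ?_, ?_, ?_, ?_, ?_, ?_, ?_,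
    ?_, ?_, ?_, ?_, ?_, ?_⟩
  · intro i; simp
  · intro i
    by_cases h : i = 0
    · subst h; rw [dLc_eq_zero A ε (0 + 1) (by norm_num)]; simp
    · rw [dLc_eq_zero A ε i h]; simp
  · intro i; simp
  · refine ⟨{0, 1}, fun i hi => ?_⟩
    simp only [Finset.mem_insert, Finset.mem_singleton, not_or] at hi
    exact ⟨Kc_sub A i hi.2, Lc_sub A i hi.1 hi.2, Mc_sub A i hi.1⟩
  · exact Kc_fin_free A
  · exact Lc_fin_free A
  · exact Mc_fin_free A
  · intro i
    by_cases h : i = 1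
    · subst h; rw [dLc_eq_zero A ε 1 one_ne_zero]; simp
    · rw [jc_eq_zero A i h]; simp
  · intro i
    by_cases h : i = 0
    · subst h; rw [qc_eq_zero A (0 + 1) (by norm_num)]; simp
    · rw [dLc_eq_zero A ε i h]; simp
  · exact exact_lemma A
  · intro i; simp
  · intro i
    by_cases h : i = 0
    · subst h
      rw [vc_eq_zero A ε 0 (by decide)]
      simp only [LinearMap.comp_zero]
      ext x
      show (0 : ULift A) = ε • ε • x
      rw [smul_smul, ← pow_two, hsq, zero_smul]
      rfl
    · rw [dLc_eq_zero A ε i h]; simp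
  · intro i; simp
  · refine ⟨hc A, fun i => ?_⟩
    by_cases h : i = 0
    · subst h
      simp only [LinearMap.comp_zero, sub_zero, add_zero]
      ext x; rfl
    · rw [vc_eq_zero A ε (i + 1) (by omega), hc_eq_zero A i h]; simp
  · intro i
    by_cases h : i = 1
    · subst h; rw [qc_eq_zero A 1 one_ne_zero]; simp
    · rw [vc_eq_zero A ε i h]; simp
  · haveI : Nontrivial A := ⟨⟨ε, 0, hne⟩⟩
    have hK : complexTrace (Kc A) (fun _ => 0) = 0 := by
      unfold complexTrace
      exact finsum_eq_zero_of_forall_eq_zero fun i => by rw [map_zero, mul_zero]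
    have hM : complexTrace (Mc A) (fun _ => 0) = 0 := by
      unfold complexTrace
      exact finsum_eq_zero_of_forall_eq_zero fun i => by rw [map_zero, mul_zero]
    have hL : complexTrace (Lc A) (vc A ε) = -ε := by
      unfold complexTrace
      rw [finsum_eq_single _ 1
        (fun i hi => by rw [vc_eq_zero A ε i hi, map_zero, mul_zero])]
      rw [trace_vc]
      norm_num
    rw [hK, hM, hL]
    simpa using hne
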